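/- arXiv:2109.14090 — 6 statements merged into one kernel-verified Lean document; each statement's English description precedes it below -/
import Mathlib

section
/- The reversible Gromov–Monge distance is symmetric: for any two network spaces (X, μ, c_X) and (Y, ν, c_Y), RGM(μ, ν) computed from (X, μ, c_X) to (Y, ν, c_Y) equals RGM(ν, μ) computed from (Y, ν, c_Y) to (X, μ, c_X). -/
open MeasureTheory
open scoped ENNReal

/-- The cost functional appearing in the reversible Gromov–Monge distance. -/
noncomputable def RGMcost {X Y : Type*} [MeasurableSpace X] [MeasurableSpace Y]
    (μ : Measure X) (ν : Measure Y) (cX : X → X → ℝ) (cY : Y → Y → ℝ)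
    (F : X → Y) (B : Y → X) : ℝ≥0∞ :=
  (∫⁻ z, ENNReal.ofReal ((cX z.1 (B z.2) - cY (F z.1) z.2) ^ 2) ∂(μ.prod ν)) ^ (1 / 2 : ℝ)

/-- The reversible Gromov–Monge (RGM) distance: the infimum of the RGM cost over all pairs
`(F, B)` of Borel measurable maps satisfying the binding constraint
`(Id, F)_# μ = (B, Id)_# ν`.  The infimum over the empty family is `⊤`. -/
noncomputable def RGM {X Y : Type*} [MeasurableSpace X] [MeasurableSpace Y]
    (μ : Measure X) (ν : Measure Y) (cX : X → X → ℝ) (cY : Y → Y → ℝ) : ℝ≥0∞ :=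
  ⨅ p : {p : (X → Y) × (Y → X) // Measurable p.1 ∧ Measurable p.2 ∧
      μ.map (fun x => (x, p.1 x)) = ν.map (fun y => (p.2 y, y))},
    RGMcost μ ν cX cY p.val.1 p.val.2

section Aux

variable {X Y : Type*}
    [MetricSpace X] [SecondCountableTopology X] [MeasurableSpace X] [BorelSpace X]
    [MetricSpace Y] [SecondCountableTopology Y] [MeasurableSpace Y] [BorelSpace Y]
    (μ : Measure X) (ν : Measure Y)
    [IsProbabilityMeasure μ] [IsProbabilityMeasure ν]

lemma rgm_map_eq {F : X → Y} {B : Y → X} (hF : Measurable F) (hB : Measurable B)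
    (h : μ.map (fun x => (x, F x)) = ν.map (fun y => (B y, y))) :
    μ.map F = ν := by
  have hIdF : Measurable fun x : X => (x, F x) := measurable_id.prodMk hF
  have hBId : Measurable fun y : Y => (B y, y) := hB.prodMk measurable_id
  have h2 := congrArg (Measure.map (Prod.snd : X × Y → Y)) h
  rwa [Measure.map_map measurable_snd (hIdF),
    Measure.map_map measurable_snd (hBId),
    show (Prod.snd ∘ fun x => (x, F x)) = F from rfl,
    show (Prod.snd ∘ fun y => (B y, y)) = id from rfl, Measure.map_id] at h2

lemma rgm_BF_ae {F : X → Y} {B : Y → X} (hF : Measurable F) (hB : Measurable B)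
    (h : μ.map (fun x => (x, F x)) = ν.map (fun y => (B y, y))) :
    ∀ᵐ x ∂μ, B (F x) = x := by
  have hIdF : Measurable fun x : X => (x, F x) := measurable_id.prodMk hF
  have hBId : Measurable fun y : Y => (B y, y) := hB.prodMk measurable_id
  have hS : MeasurableSet {p : X × Y | B p.2 = p.1} :=
    StronglyMeasurable.measurableSet_eq_fun
      (hB.comp measurable_snd).stronglyMeasurable measurable_fst.stronglyMeasurable
  have h1 : μ.map (fun x => (x, F x)) {p : X × Y | B p.2 = p.1}
      = ν.map (fun y => (B y, y)) {p : X × Y | B p.2 = p.1} := by rw [h]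
  rw [Measure.map_apply (hIdF) hS,
    Measure.map_apply (hBId) hS] at h1
  have h2 : ((fun y => (B y, y)) ⁻¹' {p : X × Y | B p.2 = p.1}) = Set.univ := by
    ext y; simp
  rw [h2, measure_univ] at h1
  have h3 : MeasurableSet {x : X | B (F x) = x} :=
    StronglyMeasurable.measurableSet_eq_fun
      (hB.comp hF).stronglyMeasurable measurable_id.stronglyMeasurable
  have h4 : ((fun x => (x, F x)) ⁻¹' {p : X × Y | B p.2 = p.1}) = {x : X | B (F x) = x} := rfl
  rw [h4] at h1
  rw [Filter.eventually_iff, mem_ae_iff]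
  have := measure_compl h3 (measure_ne_top μ _)
  rw [h1, measure_univ, tsub_self] at this
  exact this

lemma rgm_cost_symm (cX : X → X → ℝ) (cY : Y → Y → ℝ)
    (hcX : Measurable (Function.uncurry cX)) (hcY : Measurable (Function.uncurry cY))
    {F : X → Y} {B : Y → X} (hF : Measurable F) (hB : Measurable B)
    (h : μ.map (fun x => (x, F x)) = ν.map (fun y => (B y, y))) :
    RGMcost μ ν cX cY F B = RGMcost ν μ cY cX B F := by
  have hν := rgm_map_eq μ ν hF hB h
  have hBF := rgm_BF_ae μ ν hF hB h
  have hm1 : Measurable fun z : X × Y =>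
      ENNReal.ofReal ((cX z.1 (B z.2) - cY (F z.1) z.2) ^ 2) :=
    ENNReal.measurable_ofReal.comp
      (((hcX.comp (measurable_fst.prodMk (hB.comp measurable_snd))).sub
        (hcY.comp ((hF.comp measurable_fst).prodMk measurable_snd))).pow_const 2)
  have hm2 : Measurable fun z : Y × X =>
      ENNReal.ofReal ((cY z.1 (F z.2) - cX (B z.1) z.2) ^ 2) :=
    ENNReal.measurable_ofReal.comp
      (((hcY.comp (measurable_fst.prodMk (hF.comp measurable_snd))).sub
        (hcX.comp ((hB.comp measurable_fst).prodMk measurable_snd))).pow_const 2)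
  have key : (∫⁻ z, ENNReal.ofReal ((cX z.1 (B z.2) - cY (F z.1) z.2) ^ 2) ∂(μ.prod ν))
      = ∫⁻ z, ENNReal.ofReal ((cY z.1 (F z.2) - cX (B z.1) z.2) ^ 2) ∂(ν.prod μ) := by
    rw [lintegral_prod _ hm1.aemeasurable, lintegral_prod _ hm2.aemeasurable, ← hν]
    calc ∫⁻ x, ∫⁻ y, ENNReal.ofReal ((cX x (B y) - cY (F x) y) ^ 2) ∂(μ.map F) ∂μ
        = ∫⁻ x, ∫⁻ b, ENNReal.ofReal ((cX x (B (F b)) - cY (F x) (F b)) ^ 2) ∂μ ∂μ := by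
          refine lintegral_congr fun x => ?_
          exact lintegral_map (ENNReal.measurable_ofReal.comp
            (((hcX.comp (measurable_const.prodMk hB)).sub
              (hcY.comp (measurable_const.prodMk measurable_id))).pow_const 2)) hF
      _ = ∫⁻ x, ∫⁻ b, ENNReal.ofReal ((cX x b - cY (F x) (F b)) ^ 2) ∂μ ∂μ := by
          refine lintegral_congr fun x => lintegral_congr_ae (hBF.mono fun b hb => ?_)
          simp only [hb]
      _ = ∫⁻ a, ∫⁻ x, ENNReal.ofReal ((cY (F a) (F x) - cX (B (F a)) x) ^ 2) ∂μ ∂μ := by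
          refine lintegral_congr_ae (hBF.mono fun a ha => ?_)
          refine lintegral_congr fun x => ?_
          simp only [ha]
          rw [show (cY (F a) (F x) - cX a x) ^ 2 = (cX a x - cY (F a) (F x)) ^ 2 from by ring]
      _ = ∫⁻ y, ∫⁻ x, ENNReal.ofReal ((cY y (F x) - cX (B y) x) ^ 2) ∂μ ∂(μ.map F) := by
          have hm3 : Measurable fun y : Y =>
              ∫⁻ x, ENNReal.ofReal ((cY y (F x) - cX (B y) x) ^ 2) ∂μ :=
            Measurable.lintegral_prod_right hm2
          exact (lintegral_map hm3 hF).symm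
  rw [RGMcost, RGMcost, key]

lemma rgm_le (cX : X → X → ℝ) (cY : Y → Y → ℝ)
    (hcX : Measurable (Function.uncurry cX)) (hcY : Measurable (Function.uncurry cY)) :
    RGM μ ν cX cY ≤ RGM ν μ cY cX := by
  refine le_iInf fun p => ?_
  obtain ⟨⟨G, H⟩, hG, hH, hc⟩ := p
  have hIdG : Measurable fun y : Y => (y, G y) := measurable_id.prodMk hG
  have hHId : Measurable fun x : X => (H x, x) := hH.prodMk measurable_id
  have hc' : μ.map (fun x => (x, H x)) = ν.map (fun y => (G y, y)) := by
    have := congrArg (Measure.map (Prod.swap : Y × X → X × Y)) hc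
    rw [Measure.map_map measurable_swap hIdG,
      Measure.map_map measurable_swap hHId,
      show (Prod.swap ∘ fun y => (y, G y)) = fun y => (G y, y) from rfl,
      show (Prod.swap ∘ fun x => (H x, x)) = fun x => (x, H x) from rfl] at this
    exact this.symm
  have hle := iInf_le (fun p : {p : (X → Y) × (Y → X) // Measurable p.1 ∧ Measurable p.2 ∧
      μ.map (fun x => (x, p.1 x)) = ν.map (fun y => (p.2 y, y))} =>
      RGMcost μ ν cX cY p.val.1 p.val.2) ⟨(H, G), hH, hG, hc'⟩
  calc RGM μ ν cX cY ≤ RGMcost μ ν cX cY H G := hle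
    _ = RGMcost ν μ cY cX G H := rgm_cost_symm μ ν cX cY hcX hcY hH hG hc'

end Aux

/-- The reversible Gromov–Monge distance is symmetric: for network spaces
`(X, μ, c_X)` and `(Y, ν, c_Y)`, `RGM(μ, ν) = RGM(ν, μ)`. -/
theorem rgm_symm
    {X Y : Type*}
    [MetricSpace X] [CompleteSpace X] [SecondCountableTopology X]
    [MeasurableSpace X] [BorelSpace X]
    [MetricSpace Y] [CompleteSpace Y] [SecondCountableTopology Y]
    [MeasurableSpace Y] [BorelSpace Y]
    (μ : Measure X) (ν : Measure Y)
    [IsProbabilityMeasure μ] [IsProbabilityMeasure ν]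
    [μ.IsOpenPosMeasure] [ν.IsOpenPosMeasure]
    (cX : X → X → ℝ) (cY : Y → Y → ℝ)
    (hcX : Measurable (Function.uncurry cX)) (hcY : Measurable (Function.uncurry cY)) :
    RGM μ ν cX cY = RGM ν μ cY cX :=
  le_antisymm (rgm_le μ ν cX cY hcX hcY) (rgm_le ν μ cY cX hcY hcX)
end

section
/- The reversible Gromov–Monge distance satisfies the triangle inequality: for any three network spaces (X, μ_X, c_X), (Y, μ_Y, c_Y), (Z, μ_Z, c_Z), one has RGM(μ_X, μ_Z) ≤ RGM(μ_X, μ_Y) + RGM(μ_Y, μ_Z) (with the convention inf ∅ = +∞ and the usual extended-real arithmetic). -/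
open MeasureTheory
open scoped ENNReal

private lemma ofReal_sq' (u : ℝ) :
    ENNReal.ofReal (u ^ 2) = ENNReal.ofReal |u| ^ (2 : ℝ) := by
  rw [← sq_abs, ENNReal.ofReal_pow (abs_nonneg u), ← ENNReal.rpow_natCast]
  norm_num

/-- The reversible Gromov–Monge distance satisfies the triangle
inequality: `RGM(μ_X, μ_Z) ≤ RGM(μ_X, μ_Y) + RGM(μ_Y, μ_Z)` (extended-real arithmetic). -/
theorem rgm_triangle
    {X Y Z : Type*}
    [MetricSpace X] [CompleteSpace X] [SecondCountableTopology X]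
    [MeasurableSpace X] [BorelSpace X]
    [MetricSpace Y] [CompleteSpace Y] [SecondCountableTopology Y]
    [MeasurableSpace Y] [BorelSpace Y]
    [MetricSpace Z] [CompleteSpace Z] [SecondCountableTopology Z]
    [MeasurableSpace Z] [BorelSpace Z]
    (μX : Measure X) (μY : Measure Y) (μZ : Measure Z)
    [IsProbabilityMeasure μX] [IsProbabilityMeasure μY] [IsProbabilityMeasure μZ]
    [μX.IsOpenPosMeasure] [μY.IsOpenPosMeasure] [μZ.IsOpenPosMeasure]
    (cX : X → X → ℝ) (cY : Y → Y → ℝ) (cZ : Z → Z → ℝ)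
    (hcX : Measurable (Function.uncurry cX)) (hcY : Measurable (Function.uncurry cY))
    (hcZ : Measurable (Function.uncurry cZ)) :
    RGM μX μZ cX cZ ≤ RGM μX μY cX cY + RGM μY μZ cY cZ := by
  have main : ∀ p : {p : (X → Y) × (Y → X) // Measurable p.1 ∧ Measurable p.2 ∧
      μX.map (fun x => (x, p.1 x)) = μY.map (fun y => (p.2 y, y))},
      ∀ q : {q : (Y → Z) × (Z → Y) // Measurable q.1 ∧ Measurable q.2 ∧
      μY.map (fun y => (y, q.1 y)) = μZ.map (fun z => (q.2 z, z))},
      RGM μX μZ cX cZ ≤ RGMcost μX μY cX cY p.val.1 p.val.2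
        + RGMcost μY μZ cY cZ q.val.1 q.val.2 := by
    rintro ⟨⟨F₁, B₁⟩, hF₁, hB₁, h1⟩ ⟨⟨F₂, B₂⟩, hF₂, hB₂, h2⟩
    dsimp only at hF₁ hB₁ h1 hF₂ hB₂ h2
    have mF₁ : Measurable fun x : X => (x, F₁ x) := measurable_id.prodMk hF₁
    have mF₂ : Measurable fun y : Y => (y, F₂ y) := measurable_id.prodMk hF₂
    have mB₁ : Measurable fun y : Y => (B₁ y, y) := hB₁.prodMk measurable_id
    have mB₂ : Measurable fun z : Z => (B₂ z, z) := hB₂.prodMk measurable_id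
    -- marginals
    have hB₂m : μZ.map B₂ = μY := by
      have h := congrArg (Measure.map Prod.fst) h2
      rw [Measure.map_map measurable_fst mF₂,
          Measure.map_map measurable_fst mB₂] at h
      simpa [Function.comp_def, Measure.map_id] using h.symm
    have hF₁m : μX.map F₁ = μY := by
      have h := congrArg (Measure.map Prod.snd) h1
      rw [Measure.map_map measurable_snd mF₁,
          Measure.map_map measurable_snd mB₁] at h
      simpa [Function.comp_def, Measure.map_id] using h
    -- coupling of the composite
    have hmap : μX.map (fun x => (x, F₂ (F₁ x))) = μZ.map (fun z => (B₁ (B₂ z), z)) := by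
      calc μX.map (fun x => (x, F₂ (F₁ x)))
          = (μX.map (fun x => (x, F₁ x))).map (Prod.map id F₂) := by
            rw [Measure.map_map (measurable_id.prodMap hF₂) mF₁]
            rfl
        _ = (μY.map (fun y => (B₁ y, y))).map (Prod.map id F₂) := by rw [h1]
        _ = μY.map (fun y => (B₁ y, F₂ y)) := by
            rw [Measure.map_map (measurable_id.prodMap hF₂) mB₁]
            rfl
        _ = (μY.map (fun y => (y, F₂ y))).map (Prod.map B₁ id) := by
            rw [Measure.map_map (hB₁.prodMap measurable_id) mF₂]
            rfl
        _ = (μZ.map (fun z => (B₂ z, z))).map (Prod.map B₁ id) := by rw [h2]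
        _ = μZ.map (fun z => (B₁ (B₂ z), z)) := by
            rw [Measure.map_map (hB₁.prodMap measurable_id) mB₂]
            rfl
    have step1 : RGM μX μZ cX cZ
        ≤ RGMcost μX μZ cX cZ (fun x => F₂ (F₁ x)) (fun z => B₁ (B₂ z)) :=
      iInf_le _ (⟨(fun x => F₂ (F₁ x), fun z => B₁ (B₂ z)), hF₂.comp hF₁, hB₁.comp hB₂, hmap⟩ :
        {p : (X → Z) × (Z → X) // Measurable p.1 ∧ Measurable p.2 ∧
          μX.map (fun x => (x, p.1 x)) = μZ.map (fun z => (p.2 z, z))})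
    refine step1.trans ?_
    -- the two pieces
    set f : X × Z → ℝ≥0∞ :=
      fun w => ENNReal.ofReal |cX w.1 (B₁ (B₂ w.2)) - cY (F₁ w.1) (B₂ w.2)| with hfdef
    set g : X × Z → ℝ≥0∞ :=
      fun w => ENNReal.ofReal |cY (F₁ w.1) (B₂ w.2) - cZ (F₂ (F₁ w.1)) w.2| with hgdef
    have hf : Measurable f :=
      ((hcX.comp (measurable_fst.prodMk ((hB₁.comp hB₂).comp measurable_snd))).sub
        (hcY.comp ((hF₁.comp measurable_fst).prodMk (hB₂.comp measurable_snd)))).abs.ennreal_ofReal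
    have hg : Measurable g :=
      ((hcY.comp ((hF₁.comp measurable_fst).prodMk (hB₂.comp measurable_snd))).sub
        (hcZ.comp (((hF₂.comp hF₁).comp measurable_fst).prodMk measurable_snd))).abs.ennreal_ofReal
    have step2 : RGMcost μX μZ cX cZ (fun x => F₂ (F₁ x)) (fun z => B₁ (B₂ z))
        ≤ (∫⁻ w, f w ^ (2 : ℝ) ∂(μX.prod μZ)) ^ (1 / 2 : ℝ)
          + (∫⁻ w, g w ^ (2 : ℝ) ∂(μX.prod μZ)) ^ (1 / 2 : ℝ) := by
      refine le_trans ?_ (ENNReal.lintegral_Lp_add_le hf.aemeasurable hg.aemeasurable one_le_two)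
      refine ENNReal.rpow_le_rpow ?_ (by norm_num)
      refine lintegral_mono fun w => ?_
      rw [ofReal_sq']
      refine ENNReal.rpow_le_rpow ?_ (by norm_num)
      calc ENNReal.ofReal |cX w.1 (B₁ (B₂ w.2)) - cZ (F₂ (F₁ w.1)) w.2|
          ≤ ENNReal.ofReal (|cX w.1 (B₁ (B₂ w.2)) - cY (F₁ w.1) (B₂ w.2)|
              + |cY (F₁ w.1) (B₂ w.2) - cZ (F₂ (F₁ w.1)) w.2|) :=
            ENNReal.ofReal_le_ofReal (abs_sub_le _ _ _)
        _ = f w + g w := ENNReal.ofReal_add (abs_nonneg _) (abs_nonneg _)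
        _ = (f + g) w := rfl
    refine step2.trans (le_of_eq ?_)
    congr 1
    · -- change of variables X×Z → X×Y via (x,z) ↦ (x, B₂ z)
      have hT : (μX.prod μZ).map (Prod.map (id : X → X) B₂) = μX.prod μY := by
        rw [← Measure.map_prod_map _ _ measurable_id hB₂, Measure.map_id, hB₂m]
      have hh : Measurable fun v : X × Y =>
          ENNReal.ofReal ((cX v.1 (B₁ v.2) - cY (F₁ v.1) v.2) ^ 2) :=
        (((hcX.comp (measurable_fst.prodMk (hB₁.comp measurable_snd))).sub
          (hcY.comp ((hF₁.comp measurable_fst).prodMk measurable_snd))).pow_const 2).ennreal_ofReal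
      rw [RGMcost]
      congr 1
      calc ∫⁻ w, f w ^ (2 : ℝ) ∂(μX.prod μZ)
          = ∫⁻ w, ENNReal.ofReal ((cX w.1 (B₁ (B₂ w.2)) - cY (F₁ w.1) (B₂ w.2)) ^ 2)
              ∂(μX.prod μZ) := by
            simp_rw [hfdef, ← ofReal_sq']
        _ = ∫⁻ v, ENNReal.ofReal ((cX v.1 (B₁ v.2) - cY (F₁ v.1) v.2) ^ 2)
              ∂((μX.prod μZ).map (Prod.map (id : X → X) B₂)) := by
            rw [lintegral_map hh (measurable_id.prodMap hB₂)]
            rfl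
        _ = ∫⁻ v, ENNReal.ofReal ((cX v.1 (B₁ v.2) - cY (F₁ v.1) v.2) ^ 2)
              ∂(μX.prod μY) := by rw [hT]
    · -- change of variables X×Z → Y×Z via (x,z) ↦ (F₁ x, z)
      have hT : (μX.prod μZ).map (Prod.map F₁ (id : Z → Z)) = μY.prod μZ := by
        rw [← Measure.map_prod_map _ _ hF₁ measurable_id, Measure.map_id, hF₁m]
      have hh : Measurable fun v : Y × Z =>
          ENNReal.ofReal ((cY v.1 (B₂ v.2) - cZ (F₂ v.1) v.2) ^ 2) :=
        (((hcY.comp (measurable_fst.prodMk (hB₂.comp measurable_snd))).sub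
          (hcZ.comp ((hF₂.comp measurable_fst).prodMk measurable_snd))).pow_const 2).ennreal_ofReal
      rw [RGMcost]
      congr 1
      calc ∫⁻ w, g w ^ (2 : ℝ) ∂(μX.prod μZ)
          = ∫⁻ w, ENNReal.ofReal ((cY (F₁ w.1) (B₂ w.2) - cZ (F₂ (F₁ w.1)) w.2) ^ 2)
              ∂(μX.prod μZ) := by
            simp_rw [hgdef, ← ofReal_sq']
        _ = ∫⁻ v, ENNReal.ofReal ((cY v.1 (B₂ v.2) - cZ (F₂ v.1) v.2) ^ 2)
              ∂((μX.prod μZ).map (Prod.map F₁ (id : Z → Z))) := by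
            rw [lintegral_map hh (hF₁.prodMap measurable_id)]
            rfl
        _ = ∫⁻ v, ENNReal.ofReal ((cY v.1 (B₂ v.2) - cZ (F₂ v.1) v.2) ^ 2)
              ∂(μY.prod μZ) := by rw [hT]
  calc RGM μX μZ cX cZ
      ≤ ⨅ p : {p : (X → Y) × (Y → X) // Measurable p.1 ∧ Measurable p.2 ∧
          μX.map (fun x => (x, p.1 x)) = μY.map (fun y => (p.2 y, y))},
        ⨅ q : {q : (Y → Z) × (Z → Y) // Measurable q.1 ∧ Measurable q.2 ∧
          μY.map (fun y => (y, q.1 y)) = μZ.map (fun z => (q.2 z, z))},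
        (RGMcost μX μY cX cY p.val.1 p.val.2 + RGMcost μY μZ cY cZ q.val.1 q.val.2) :=
        le_iInf fun p => le_iInf fun q => main p q
    _ = RGM μX μY cX cY + RGM μY μZ cY cZ := by
        rw [RGM, RGM, ENNReal.iInf_add]
        exact iInf_congr fun p => ENNReal.add_iInf.symm ▸ rfl
end

section
/- Binding pairs compose: let (X, μ_X), (Y, μ_Y), (Z, μ_Z) be complete separable metric spaces equipped with Borel probability measures, and let F_Y : X → Y, B_X : Y → X, F_Z : Y → Z, B_Y : Z → Y be Borel measurable maps. If (Id, F_Y)_#μ_X = (B_X, Id)_#μ_Y as measures on X × Y and (Id, F_Z)_#μ_Y = (B_Y, Id)_#μ_Z as measures on Y × Z, then (Id, F_Z ∘ F_Y)_#μ_X = (B_X ∘ B_Y, Id)_#μ_Z as measures on X × Z. -/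
open MeasureTheory
open scoped ENNReal

/-- Binding pairs compose: if `(Id, F_Y)_# μ_X = (B_X, Id)_# μ_Y` and
`(Id, F_Z)_# μ_Y = (B_Y, Id)_# μ_Z`, then
`(Id, F_Z ∘ F_Y)_# μ_X = (B_X ∘ B_Y, Id)_# μ_Z`. -/
theorem binding_pairs_compose
    {X Y Z : Type*}
    [MetricSpace X] [CompleteSpace X] [SecondCountableTopology X]
    [MeasurableSpace X] [BorelSpace X]
    [MetricSpace Y] [CompleteSpace Y] [SecondCountableTopology Y]
    [MeasurableSpace Y] [BorelSpace Y]
    [MetricSpace Z] [CompleteSpace Z] [SecondCountableTopology Z]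
    [MeasurableSpace Z] [BorelSpace Z]
    (μX : Measure X) (μY : Measure Y) (μZ : Measure Z)
    [IsProbabilityMeasure μX] [IsProbabilityMeasure μY] [IsProbabilityMeasure μZ]
    (FY : X → Y) (BX : Y → X) (FZ : Y → Z) (BY : Z → Y)
    (hFY : Measurable FY) (hBX : Measurable BX) (hFZ : Measurable FZ) (hBY : Measurable BY)
    (h1 : μX.map (fun x => (x, FY x)) = μY.map (fun y => (BX y, y)))
    (h2 : μY.map (fun y => (y, FZ y)) = μZ.map (fun z => (BY z, z))) :
    μX.map (fun x => (x, FZ (FY x))) = μZ.map (fun z => (BX (BY z), z)) := by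
  have m1 : Measurable fun p : X × Y => (p.1, FZ p.2) := by fun_prop
  have m2 : Measurable fun p : Y × Z => (BX p.1, p.2) := by fun_prop
  have mXY : Measurable fun x : X => (x, FY x) := by fun_prop
  have mYX : Measurable fun y : Y => (BX y, y) := by fun_prop
  have mYZ : Measurable fun y : Y => (y, FZ y) := by fun_prop
  have mZY : Measurable fun z : Z => (BY z, z) := by fun_prop
  calc μX.map (fun x => (x, FZ (FY x)))
      = (μX.map (fun x => (x, FY x))).map (fun p : X × Y => (p.1, FZ p.2)) := by
        rw [Measure.map_map m1 mXY]; rfl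
    _ = (μY.map (fun y => (BX y, y))).map (fun p : X × Y => (p.1, FZ p.2)) := by rw [h1]
    _ = μY.map (fun y => (BX y, FZ y)) := by rw [Measure.map_map m1 mYX]; rfl
    _ = (μY.map (fun y => (y, FZ y))).map (fun p : Y × Z => (BX p.1, p.2)) := by
        rw [Measure.map_map m2 mYZ]; rfl
    _ = (μZ.map (fun z => (BY z, z))).map (fun p : Y × Z => (BX p.1, p.2)) := by rw [h2]
    _ = μZ.map (fun z => (BX (BY z), z)) := by rw [Measure.map_map m2 mZY]; rfl
end

section
/- Cost subadditivity under composition: let (X, μ_X, c_X), (Y, μ_Y, c_Y), (Z, μ_Z, c_Z) be network spaces with bounded measurable cost functions, and let F_Y : X → Y, B_X : Y → X, F_Z : Y → Z, B_Y : Z → Y be Borel measurable maps satisfying (F_Y)_#μ_X = μ_Y and (B_Y)_#μ_Z = μ_Y. Then C_XZ(F_Z ∘ F_Y, B_X ∘ B_Y) ≤ C_XY(F_Y, B_X) + C_YZ(F_Z, B_Y), where C_XY(F, B) := (∫_{X×Y} (c_X(x, B(y)) − c_Y(F(x), y))² d(μ_X ⊗ μ_Y))^{1/2}, C_YZ(F,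 B) := (∫_{Y×Z} (c_Y(y, B(z)) − c_Z(F(y), z))² d(μ_Y ⊗ μ_Z))^{1/2}, and C_XZ(F, B) := (∫_{X×Z} (c_X(x, B(z)) − c_Z(F(x), z))² d(μ_X ⊗ μ_Z))^{1/2}. -/
open MeasureTheory
open scoped ENNReal

/-- Cost subadditivity under composition:
`C_XZ(F_Z ∘ F_Y, B_X ∘ B_Y) ≤ C_XY(F_Y, B_X) + C_YZ(F_Z, B_Y)` whenever
`(F_Y)_# μ_X = μ_Y` and `(B_Y)_# μ_Z = μ_Y`, for bounded measurable costs. -/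
theorem rgm_cost_subadditive
    {X Y Z : Type*}
    [MetricSpace X] [CompleteSpace X] [SecondCountableTopology X]
    [MeasurableSpace X] [BorelSpace X]
    [MetricSpace Y] [CompleteSpace Y] [SecondCountableTopology Y]
    [MeasurableSpace Y] [BorelSpace Y]
    [MetricSpace Z] [CompleteSpace Z] [SecondCountableTopology Z]
    [MeasurableSpace Z] [BorelSpace Z]
    (μX : Measure X) (μY : Measure Y) (μZ : Measure Z)
    [IsProbabilityMeasure μX] [IsProbabilityMeasure μY] [IsProbabilityMeasure μZ]
    [μX.IsOpenPosMeasure] [μY.IsOpenPosMeasure] [μZ.IsOpenPosMeasure]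
    (cX : X → X → ℝ) (cY : Y → Y → ℝ) (cZ : Z → Z → ℝ)
    (hcX : Measurable (Function.uncurry cX)) (hcY : Measurable (Function.uncurry cY))
    (hcZ : Measurable (Function.uncurry cZ))
    (MX MY MZ : ℝ)
    (hbX : ∀ x x', |cX x x'| ≤ MX) (hbY : ∀ y y', |cY y y'| ≤ MY)
    (hbZ : ∀ z z', |cZ z z'| ≤ MZ)
    (FY : X → Y) (BX : Y → X) (FZ : Y → Z) (BY : Z → Y)
    (hFY : Measurable FY) (hBX : Measurable BX) (hFZ : Measurable FZ) (hBY : Measurable BY)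
    (hFYpush : μX.map FY = μY) (hBYpush : μZ.map BY = μY) :
    RGMcost μX μZ cX cZ (FZ ∘ FY) (BX ∘ BY) ≤
      RGMcost μX μY cX cY FY BX + RGMcost μY μZ cY cZ FZ BY := by
  -- Define the two intermediate functions on `X × Z`.
  set g : X × Z → ℝ≥0∞ :=
    fun z => ENNReal.ofReal |cX z.1 (BX (BY z.2)) - cY (FY z.1) (BY z.2)| with hg
  set h : X × Z → ℝ≥0∞ :=
    fun z => ENNReal.ofReal |cY (FY z.1) (BY z.2) - cZ (FZ (FY z.1)) z.2| with hh
  have hgm : Measurable g := by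
    apply ENNReal.measurable_ofReal.comp
    apply Measurable.abs
    exact (hcX.comp ((measurable_fst).prodMk (hBX.comp (hBY.comp measurable_snd)))).sub
      (hcY.comp ((hFY.comp measurable_fst).prodMk (hBY.comp measurable_snd)))
  have hhm : Measurable h := by
    apply ENNReal.measurable_ofReal.comp
    apply Measurable.abs
    exact (hcY.comp ((hFY.comp measurable_fst).prodMk (hBY.comp measurable_snd))).sub
      (hcZ.comp ((hFZ.comp (hFY.comp measurable_fst)).prodMk measurable_snd))
  have key : ∀ (a : ℝ), ENNReal.ofReal (a ^ 2) = ENNReal.ofReal |a| ^ (2 : ℝ) := by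
    intro a
    rw [ENNReal.rpow_two, ← ENNReal.ofReal_pow (abs_nonneg a), sq_abs]
  have step1 : RGMcost μX μZ cX cZ (FZ ∘ FY) (BX ∘ BY)
      ≤ (∫⁻ z, (g z + h z) ^ (2 : ℝ) ∂(μX.prod μZ)) ^ (1 / 2 : ℝ) := by
    unfold RGMcost
    refine ENNReal.rpow_le_rpow (lintegral_mono fun z => ?_) (by norm_num)
    rw [key]
    refine ENNReal.rpow_le_rpow ?_ (by norm_num)
    calc ENNReal.ofReal |cX z.1 ((BX ∘ BY) z.2) - cZ ((FZ ∘ FY) z.1) z.2|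
        ≤ ENNReal.ofReal (|cX z.1 (BX (BY z.2)) - cY (FY z.1) (BY z.2)|
            + |cY (FY z.1) (BY z.2) - cZ (FZ (FY z.1)) z.2|) := by
          apply ENNReal.ofReal_le_ofReal
          simpa using abs_sub_le (cX z.1 (BX (BY z.2))) (cY (FY z.1) (BY z.2))
            (cZ (FZ (FY z.1)) z.2)
      _ = g z + h z := ENNReal.ofReal_add (abs_nonneg _) (abs_nonneg _)
  have step2 : (∫⁻ z, (g z + h z) ^ (2 : ℝ) ∂(μX.prod μZ)) ^ (1 / 2 : ℝ)
      ≤ (∫⁻ z, g z ^ (2 : ℝ) ∂(μX.prod μZ)) ^ (1 / 2 : ℝ)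
        + (∫⁻ z, h z ^ (2 : ℝ) ∂(μX.prod μZ)) ^ (1 / 2 : ℝ) :=
    ENNReal.lintegral_Lp_add_le hgm.aemeasurable hhm.aemeasurable (by norm_num)
  have hmap1 : μX.prod μY = (μX.prod μZ).map (Prod.map id BY) := by
    rw [← Measure.map_prod_map _ _ measurable_id hBY, Measure.map_id, hBYpush]
  have hmap2 : μY.prod μZ = (μX.prod μZ).map (Prod.map FY id) := by
    rw [← Measure.map_prod_map _ _ hFY measurable_id, Measure.map_id, hFYpush]
  have eq1 : (∫⁻ z, g z ^ (2 : ℝ) ∂(μX.prod μZ)) ^ (1 / 2 : ℝ)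
      = RGMcost μX μY cX cY FY BX := by
    unfold RGMcost
    congr 1
    rw [hmap1, lintegral_map ?_ (measurable_id.prodMap hBY)]
    · refine lintegral_congr fun z => ?_
      rw [key]
      rfl
    · exact (ENNReal.measurable_ofReal.comp
        (((hcX.comp (measurable_fst.prodMk (hBX.comp measurable_snd))).sub
          (hcY.comp ((hFY.comp measurable_fst).prodMk measurable_snd))).pow_const 2))
  have eq2 : (∫⁻ z, h z ^ (2 : ℝ) ∂(μX.prod μZ)) ^ (1 / 2 : ℝ)
      = RGMcost μY μZ cY cZ FZ BY := by
    unfold RGMcost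
    congr 1
    rw [hmap2, lintegral_map ?_ (hFY.prodMap measurable_id)]
    · refine lintegral_congr fun z => ?_
      rw [key]
      rfl
    · exact (ENNReal.measurable_ofReal.comp
        (((hcY.comp (measurable_fst.prodMk (hBY.comp measurable_snd))).sub
          (hcZ.comp ((hFZ.comp measurable_fst).prodMk measurable_snd))).pow_const 2))
  calc RGMcost μX μZ cX cZ (FZ ∘ FY) (BX ∘ BY)
      ≤ (∫⁻ z, (g z + h z) ^ (2 : ℝ) ∂(μX.prod μZ)) ^ (1 / 2 : ℝ) := step1
    _ ≤ _ := step2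
    _ = _ := by rw [eq1, eq2]
end

section
/- Failure of the binding condition for the tent map: let μ be the uniform (Lebesgue) probability measure on [0, 1] and define F : [0, 1] → [0, 1] by F(x) = |2x − 1|. Then F_#μ = μ, but (Id, F)_#μ ≠ (F, Id)_#μ as Borel measures on [0, 1] × [0, 1]; that is, F_#μ = ν and F_#ν = μ hold with ν = μ and B = F, yet the binding constraint (Id, F)_#μ = (B, Id)_#ν fails. -/
open MeasureTheory
open scoped ENNReal

lemma affine_embedding (a b : ℝ) (ha : a ≠ 0) :
    MeasurableEmbedding (fun x : ℝ => a * x + b) :=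
  ((Homeomorph.mulLeft₀ a ha).trans (Homeomorph.addRight b)).toMeasurableEquiv.measurableEmbedding

lemma map_affine (a b : ℝ) (ha : a ≠ 0) :
    Measure.map (fun x : ℝ => a * x + b) volume = ENNReal.ofReal |a⁻¹| • volume := by
  have : (fun x : ℝ => a * x + b) = (fun y : ℝ => y + b) ∘ (a * ·) := rfl
  rw [this, ← Measure.map_map (measurable_add_const b) (measurable_const_mul a),
    Real.map_volume_mul_left ha, Measure.map_smul, map_add_right_eq_self]

lemma tent_pushforward :
    (MeasureTheory.volume.restrict (Set.Icc (0 : ℝ) 1)).map (fun x : ℝ => |2 * x - 1|) =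
      MeasureTheory.volume.restrict (Set.Icc (0 : ℝ) 1) := by
  have hF : Measurable fun x : ℝ => |2 * x - 1| := by fun_prop
  have hsplit : volume.restrict (Set.Icc (0:ℝ) 1)
      = volume.restrict (Set.Icc 0 (1/2)) + volume.restrict (Set.Ioc (1/2) 1) := by
    rw [← Measure.restrict_union (by
        rw [Set.disjoint_left]; intro x hx hx'
        exact absurd hx.2 (not_le.2 hx'.1)) measurableSet_Ioc,
      Set.Icc_union_Ioc_eq_Icc (by norm_num) (by norm_num)]
  have h1 : (volume.restrict (Set.Icc (0:ℝ) (1/2))).map (fun x => |2 * x - 1|)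
      = ENNReal.ofReal (1/2) • volume.restrict (Set.Icc (0:ℝ) 1) := by
    have hcong : (fun x : ℝ => |2 * x - 1|)
        =ᵐ[volume.restrict (Set.Icc (0:ℝ) (1/2))] (fun x => (-2) * x + 1) := by
      filter_upwards [ae_restrict_mem measurableSet_Icc] with x hx
      rw [abs_of_nonpos (by simp at hx; linarith [hx.2])]; ring
    have hpre : (fun x : ℝ => (-2) * x + 1) ⁻¹' (Set.Icc 0 1) = Set.Icc 0 (1/2) := by
      ext x
      simp only [Set.mem_preimage, Set.mem_Icc]
      constructor <;> rintro ⟨ha, hb⟩ <;> constructor <;> linarith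
    rw [Measure.map_congr hcong, ← hpre,
      ← (affine_embedding (-2) 1 (by norm_num)).restrict_map,
      map_affine (-2) 1 (by norm_num), Measure.restrict_smul]
    norm_num [abs_of_nonneg]
  have h2 : (volume.restrict (Set.Ioc (1/2:ℝ) 1)).map (fun x => |2 * x - 1|)
      = ENNReal.ofReal (1/2) • volume.restrict (Set.Icc (0:ℝ) 1) := by
    rw [Measure.restrict_congr_set Ioc_ae_eq_Icc]
    have hcong : (fun x : ℝ => |2 * x - 1|)
        =ᵐ[volume.restrict (Set.Icc (1/2:ℝ) 1)] (fun x => (2:ℝ) * x + (-1)) := by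
      filter_upwards [ae_restrict_mem measurableSet_Icc] with x hx
      rw [abs_of_nonneg (by simp at hx; linarith [hx.1])]; ring
    have hpre : (fun x : ℝ => (2:ℝ) * x + (-1)) ⁻¹' (Set.Icc 0 1) = Set.Icc (1/2) 1 := by
      ext x
      simp only [Set.mem_preimage, Set.mem_Icc]
      constructor <;> rintro ⟨ha, hb⟩ <;> constructor <;> linarith
    rw [Measure.map_congr hcong, ← hpre,
      ← (affine_embedding 2 (-1) (by norm_num)).restrict_map,
      map_affine 2 (-1) (by norm_num), Measure.restrict_smul]
    norm_num [abs_of_nonneg]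
  conv_lhs => rw [hsplit]
  rw [Measure.map_add _ _ hF, h1, h2, ← add_smul, ← ENNReal.ofReal_add (by norm_num)
    (by norm_num)]
  norm_num

/-- Failure of the binding condition for the tent map: with `μ` the uniform
(Lebesgue) probability measure on `[0, 1]` and `F(x) = |2x − 1|`, one has `F_# μ = μ`, but
`(Id, F)_# μ ≠ (F, Id)_# μ` as Borel measures on the square. -/
theorem tent_map_binding_fails :
    (MeasureTheory.volume.restrict (Set.Icc (0 : ℝ) 1)).map (fun x : ℝ => |2 * x - 1|) =
        MeasureTheory.volume.restrict (Set.Icc (0 : ℝ) 1) ∧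
      (MeasureTheory.volume.restrict (Set.Icc (0 : ℝ) 1)).map
          (fun x : ℝ => (x, |2 * x - 1|)) ≠
        (MeasureTheory.volume.restrict (Set.Icc (0 : ℝ) 1)).map
          (fun x : ℝ => (|2 * x - 1|, x)) := by
  refine ⟨tent_pushforward, ?_⟩
  have hm1 : Measurable fun x : ℝ => (x, |2 * x - 1|) := by fun_prop
  have hm2 : Measurable fun x : ℝ => (|2 * x - 1|, x) := by fun_prop
  have hS : MeasurableSet (Set.Icc (0:ℝ) (1/4) ×ˢ Set.Icc (0:ℝ) (1/2)) :=
    measurableSet_Icc.prod measurableSet_Icc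
  intro h
  have := congrArg (fun m : Measure (ℝ × ℝ) => m (Set.Icc (0:ℝ) (1/4) ×ˢ Set.Icc (0:ℝ) (1/2))) h
  simp only [Measure.map_apply hm1 hS, Measure.map_apply hm2 hS,
    Measure.restrict_apply (hm1 hS), Measure.restrict_apply (hm2 hS)] at this
  have e1 : (fun x : ℝ => (x, |2 * x - 1|)) ⁻¹' (Set.Icc (0:ℝ) (1/4) ×ˢ Set.Icc (0:ℝ) (1/2))
      ∩ Set.Icc 0 1 = {(1/4 : ℝ)} := by
    ext x
    simp only [Set.mem_inter_iff, Set.mem_preimage, Set.mem_prod, Set.mem_Icc,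
      Set.mem_singleton_iff, abs_nonneg, true_and, abs_le]
    constructor
    · rintro ⟨⟨⟨h1, h2⟩, h3, h4⟩, h5, h6⟩
      linarith
    · rintro rfl
      norm_num
  have e2 : (fun x : ℝ => (|2 * x - 1|, x)) ⁻¹' (Set.Icc (0:ℝ) (1/4) ×ˢ Set.Icc (0:ℝ) (1/2))
      ∩ Set.Icc 0 1 = Set.Icc (3/8 : ℝ) (1/2) := by
    ext x
    simp only [Set.mem_inter_iff, Set.mem_preimage, Set.mem_prod, Set.mem_Icc,
      Set.mem_singleton_iff, abs_nonneg, true_and, abs_le]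
    constructor
    · rintro ⟨⟨⟨h1, h2⟩, h3, h4⟩, h5, h6⟩
      constructor <;> linarith
    · rintro ⟨h1, h2⟩
      refine ⟨⟨⟨by linarith, by linarith⟩, by linarith, by linarith⟩, by linarith, by linarith⟩
  rw [e1, e2, Real.volume_singleton, Real.volume_Icc] at this
  rw [eq_comm, ENNReal.ofReal_eq_zero] at this
  norm_num at this
end

section
/- Pointwise concentration of the empirical quadratic cost: there is a universal constant C > 0 with the following property. Let (X, μ) and (Y, ν) be complete separable metric spaces with Borel probability measures, let c_X : X × X → ℝ and c_Y : Y × Y → ℝ be measurable with 0 ≤ c_X, c_Y ≤ √(H/4) everywhere for some H > 0, and let F : X → Y and B : Y → X be Borel measurable. For x ∈ X^m and y ∈ Y^n put Ĉ₀(F, B) = (1/(mn)) Σ_{i=1}^m Σ_{j=1}^n (c_X(x_i, B(y_j)) − c_Y(F(x_i), y_j))² and C₀(F, B) = ∫_{X×Y} (c_X(x, B(y)) − c_Y(F(x), y))² d(μ⊗ν). Then for every m, n ≥ 1 and every δ ∈ (0, 1), with probability at least 1 − 4δ under μ^{⊗m} ⊗ ν^{⊗n} (i.e., over i.i.d. samples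 x₁,…,x_m ∼ μ and y₁,…,y_n ∼ ν), one has |Ĉ₀(F, B) − C₀(F, B)| ≤ C · H · √( log((m ∨ n)/δ) / (m ∧ n) ). -/
open MeasureTheory Real ProbabilityTheory
open scoped ENNReal


/-- Bounded mean-zero variables have sub-Gaussian mgf. -/
lemma aux_mgf_le {Ω : Type} [MeasurableSpace Ω] (ρ : Measure Ω) [IsProbabilityMeasure ρ]
    {g : Ω → ℝ} (hg : Measurable g) {c : ℝ} (hc : 0 < c) (hb : ∀ ω, |g ω| ≤ c)
    (hmean : ∫ ω, g ω ∂ρ = 0) (l : ℝ) :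
    ∫ ω, Real.exp (l * g ω) ∂ρ ≤ Real.exp (l ^ 2 * c ^ 2 / 2) := by
  have hgint : Integrable g ρ := by
    refine (integrable_const c).mono' hg.aestronglyMeasurable ?_
    exact Filter.Eventually.of_forall fun ω => hb ω
  set e1 := Real.exp (-(l * c)) with he1
  set e2 := Real.exp (l * c) with he2
  have key : ∀ ω, Real.exp (l * g ω) ≤ (e1 + e2) / 2 + ((e2 - e1) / (2 * c)) * g ω := by
    intro ω
    have habs := hb ω
    have h1 : (0:ℝ) ≤ (c - g ω) / (2 * c) := by
      apply div_nonneg _ (by linarith)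
      have := abs_le.1 habs
      linarith [this.2]
    have h2 : (0:ℝ) ≤ (c + g ω) / (2 * c) := by
      apply div_nonneg _ (by linarith)
      have := abs_le.1 habs
      linarith [this.1]
    have hsum : (c - g ω) / (2 * c) + (c + g ω) / (2 * c) = 1 := by
      field_simp
      ring
    have hcvx := convexOn_exp.2 (Set.mem_univ (-(l * c))) (Set.mem_univ (l * c)) h1 h2 hsum
    simp only [smul_eq_mul] at hcvx
    have harg : (c - g ω) / (2 * c) * (-(l * c)) + (c + g ω) / (2 * c) * (l * c) = l * g ω := by
      field_simp
      ring
    rw [harg] at hcvx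
    refine hcvx.trans_eq ?_
    field_simp [he1, he2]
    rw [he1, he2, mul_comm l c]; ring
  have hexp_int : Integrable (fun ω => Real.exp (l * g ω)) ρ := by
    refine (integrable_const (Real.exp (|l| * c))).mono'
      ((hg.const_mul l).exp).aestronglyMeasurable ?_
    refine Filter.Eventually.of_forall fun ω => ?_
    rw [Real.norm_eq_abs, abs_of_pos (Real.exp_pos _)]
    apply Real.exp_le_exp.2
    calc l * g ω ≤ |l * g ω| := le_abs_self _
    _ = |l| * |g ω| := abs_mul _ _
    _ ≤ |l| * c := by
        apply mul_le_mul_of_nonneg_left (hb ω) (abs_nonneg _)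
  have hRHS_int : Integrable (fun ω => (e1 + e2) / 2 + ((e2 - e1) / (2 * c)) * g ω) ρ :=
    (integrable_const _).add (hgint.const_mul _)
  calc ∫ ω, Real.exp (l * g ω) ∂ρ
      ≤ ∫ ω, ((e1 + e2) / 2 + ((e2 - e1) / (2 * c)) * g ω) ∂ρ :=
        integral_mono hexp_int hRHS_int key
    _ = (e1 + e2) / 2 := by
        rw [integral_add (integrable_const _) (hgint.const_mul _), integral_const,
          integral_const_mul, hmean, mul_zero, add_zero, probReal_univ]
        simp
    _ = Real.cosh (l * c) := by rw [Real.cosh_eq]; ring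
    _ ≤ Real.exp ((l * c) ^ 2 / 2) := Real.cosh_le_exp_half_sq _
    _ = Real.exp (l ^ 2 * c ^ 2 / 2) := by ring_nf

/-- Hoeffding-type tail bound for the average of i.i.d. bounded mean-zero variables. -/
lemma aux_hoeffding_pi {Ω : Type} [MeasurableSpace Ω] (ρ : Measure Ω) [IsProbabilityMeasure ρ]
    {g : Ω → ℝ} (hg : Measurable g) {c : ℝ} (hc : 0 < c) (hb : ∀ ω, |g ω| ≤ c)
    (hmean : ∫ ω, g ω ∂ρ = 0) (n : ℕ) {t : ℝ} (ht : 0 ≤ t) :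
    (Measure.pi fun _ : Fin n => ρ) {ω | (n : ℝ) * t ≤ ∑ j, g (ω j)} ≤
      ENNReal.ofReal (Real.exp (-((n : ℝ) * t ^ 2) / (2 * c ^ 2))) := by
  letI : MeasureSpace Ω := ⟨ρ⟩
  have hvol : (Measure.pi fun _ : Fin n => ρ) = (volume : Measure (Fin n → Ω)) :=
    (MeasureTheory.volume_pi (ι := Fin n) (α := fun _ => Ω)).symm
  set l : ℝ := t / c ^ 2 with hl
  have hl0 : 0 ≤ l := div_nonneg ht (by positivity)
  set S : (Fin n → Ω) → ℝ := fun ω => ∑ j, g (ω j) with hS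
  have hSm : Measurable S := by
    apply Finset.measurable_sum
    intro j _
    exact hg.comp (measurable_pi_apply j)
  have hSb : ∀ ω, |S ω| ≤ (n : ℝ) * c := by
    intro ω
    calc |S ω| ≤ ∑ j, |g (ω j)| := Finset.abs_sum_le_sum_abs _ _
      _ ≤ ∑ _j : Fin n, c := Finset.sum_le_sum fun j _ => hb (ω j)
      _ = (n : ℝ) * c := by simp [mul_comm]
  haveI : IsProbabilityMeasure (volume : Measure (Fin n → Ω)) := by
    rw [← hvol]; infer_instance
  have hint : Integrable (fun ω => Real.exp (l * S ω)) (volume : Measure (Fin n → Ω)) := by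
    refine (integrable_const (Real.exp (l * ((n : ℝ) * c)))).mono'
      ((hSm.const_mul l).exp).aestronglyMeasurable ?_
    refine Filter.Eventually.of_forall fun ω => ?_
    rw [Real.norm_eq_abs, abs_of_pos (Real.exp_pos _)]
    apply Real.exp_le_exp.2
    calc l * S ω ≤ l * |S ω| := mul_le_mul_of_nonneg_left (le_abs_self _) hl0
      _ ≤ l * ((n : ℝ) * c) := mul_le_mul_of_nonneg_left (hSb ω) hl0
  have hcher := measure_ge_le_exp_mul_mgf (X := S) (μ := (volume : Measure (Fin n → Ω)))
    ((n : ℝ) * t) hl0 hint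
  have hmgf : mgf S (volume : Measure (Fin n → Ω)) l ≤ Real.exp (l ^ 2 * c ^ 2 / 2) ^ n := by
    have h1 : mgf S (volume : Measure (Fin n → Ω)) l
        = (∫ ω, Real.exp (l * g ω) ∂ρ) ^ n := by
      rw [mgf]
      have : ∀ ω : Fin n → Ω, Real.exp (l * S ω) = ∏ j, Real.exp (l * g (ω j)) := by
        intro ω
        rw [hS]
        simp only [Finset.mul_sum]
        rw [Real.exp_sum]
      calc ∫ ω, Real.exp (l * S ω) = ∫ ω : Fin n → Ω, ∏ j, Real.exp (l * g (ω j)) := by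
            exact integral_congr_ae (Filter.Eventually.of_forall this)
        _ = (∫ ω, Real.exp (l * g ω)) ^ n := by
            rw [← hvol, MeasureTheory.integral_fintype_prod_eq_pow (ι := Fin n) (fun x => Real.exp (l * g x))]
            simp
            rfl
        _ = (∫ ω, Real.exp (l * g ω) ∂ρ) ^ n := rfl
    rw [h1]
    apply pow_le_pow_left₀ (integral_nonneg fun ω => (Real.exp_pos _).le)
    exact aux_mgf_le ρ hg hc hb hmean l
  have hfinal : Real.exp (-l * ((n : ℝ) * t)) * Real.exp (l ^ 2 * c ^ 2 / 2) ^ n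
      = Real.exp (-((n : ℝ) * t ^ 2) / (2 * c ^ 2)) := by
    rw [← Real.exp_nat_mul, ← Real.exp_add]
    congr 1
    rw [hl]
    field_simp
    ring
  rw [hvol]
  have hne : (volume : Measure (Fin n → Ω)) {ω | (n : ℝ) * t ≤ S ω} ≠ ⊤ :=
    measure_ne_top _ _
  calc (volume : Measure (Fin n → Ω)) {ω | (n : ℝ) * t ≤ S ω}
      = ENNReal.ofReal (((volume : Measure (Fin n → Ω)) {ω | (n : ℝ) * t ≤ S ω}).toReal) :=
        (ENNReal.ofReal_toReal hne).symm
    _ ≤ ENNReal.ofReal (Real.exp (-((n : ℝ) * t ^ 2) / (2 * c ^ 2))) := by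
        apply ENNReal.ofReal_le_ofReal
        calc _ ≤ Real.exp (-l * ((n : ℝ) * t)) * mgf S (volume : Measure (Fin n → Ω)) l := hcher
          _ ≤ Real.exp (-l * ((n : ℝ) * t)) * Real.exp (l ^ 2 * c ^ 2 / 2) ^ n := by
              apply mul_le_mul_of_nonneg_left hmgf (Real.exp_pos _).le
          _ = _ := hfinal

set_option maxHeartbeats 4000000 in
/-- Pointwise concentration of the empirical quadratic cost: there is a
universal constant `C > 0` such that, for all Polish probability spaces, bounded costs
(taking values in `[0, √(H/4)]`), measurable `F, B`, sample sizes `m, n ≥ 1` and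
`δ ∈ (0, 1)`, with probability at least `1 − 4δ` over i.i.d. samples,
`|Ĉ₀(F, B) − C₀(F, B)| ≤ C · H · √(log((m ∨ n)/δ) / (m ∧ n))`. -/
theorem empirical_quadratic_cost_concentration :
    ∃ C : ℝ, 0 < C ∧
      ∀ (X Y : Type)
        [MetricSpace X] [CompleteSpace X] [SecondCountableTopology X]
        [MeasurableSpace X] [BorelSpace X]
        [MetricSpace Y] [CompleteSpace Y] [SecondCountableTopology Y]
        [MeasurableSpace Y] [BorelSpace Y]
        (μ : Measure X) (ν : Measure Y),
        IsProbabilityMeasure μ → IsProbabilityMeasure ν →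
        ∀ (cX : X → X → ℝ) (cY : Y → Y → ℝ) (H : ℝ), 0 < H →
        Measurable (Function.uncurry cX) → Measurable (Function.uncurry cY) →
        (∀ x x', 0 ≤ cX x x' ∧ cX x x' ≤ Real.sqrt (H / 4)) →
        (∀ y y', 0 ≤ cY y y' ∧ cY y y' ≤ Real.sqrt (H / 4)) →
        ∀ (F : X → Y) (B : Y → X), Measurable F → Measurable B →
        ∀ (m n : ℕ), 1 ≤ m → 1 ≤ n →
        ∀ δ : ℝ, 0 < δ → δ < 1 →
        ENNReal.ofReal (1 - 4 * δ) ≤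
          ((Measure.pi fun _ : Fin m => μ).prod (Measure.pi fun _ : Fin n => ν))
            {p : (Fin m → X) × (Fin n → Y) |
              |(1 / ((m : ℝ) * n)) *
                    (∑ i : Fin m, ∑ j : Fin n,
                      (cX (p.1 i) (B (p.2 j)) - cY (F (p.1 i)) (p.2 j)) ^ 2) -
                  ∫ z, (cX z.1 (B z.2) - cY (F z.1) z.2) ^ 2 ∂(μ.prod ν)| ≤
                C * H * Real.sqrt (Real.log ((max m n : ℝ) / δ) / (min m n : ℝ))} := by
  refine ⟨1, one_pos, ?_⟩
  intro X Y _ _ _ _ _ _ _ _ _ _ μ ν hμ hν cX cY H hH hcXm hcYm hbX hbY F B hF hB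
    m n hm hn δ hδ0 hδ1
  haveI := hμ; haveI := hν
  by_cases hδ4 : 1 - 4 * δ ≤ 0
  · rw [ENNReal.ofReal_eq_zero.2 hδ4]; exact bot_le
  push_neg at hδ4
  have hm0 : (0:ℝ) < m := by exact_mod_cast hm
  have hn0 : (0:ℝ) < n := by exact_mod_cast hn
  have hmin1 : (1:ℝ) ≤ min (m : ℝ) (n : ℝ) := le_min (by exact_mod_cast hm) (by exact_mod_cast hn)
  have hmin0 : (0:ℝ) < min (m : ℝ) (n : ℝ) := by linarith
  have hmax1 : (1:ℝ) ≤ max (m : ℝ) (n : ℝ) := le_max_of_le_left (by exact_mod_cast hm)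
  have hminm : min (m : ℝ) (n : ℝ) ≤ (m : ℝ) := min_le_left _ _
  have hminn : min (m : ℝ) (n : ℝ) ≤ (n : ℝ) := min_le_right _ _
  have hc : (0:ℝ) < H / 4 := by linarith
  -- the squared cost function
  set f : X × Y → ℝ := fun z => (cX z.1 (B z.2) - cY (F z.1) z.2) ^ 2 with hfdef
  have hfm : Measurable f := by
    apply Measurable.pow_const
    exact (hcXm.comp (measurable_fst.prodMk (hB.comp measurable_snd))).sub
      (hcYm.comp ((hF.comp measurable_fst).prodMk measurable_snd))
  have hf0 : ∀ z, 0 ≤ f z := fun z => sq_nonneg _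
  have hsq : Real.sqrt (H / 4) ^ 2 = H / 4 := Real.sq_sqrt (by linarith)
  have hfub : ∀ z, f z ≤ H / 4 := by
    intro z
    have h1 := hbX z.1 (B z.2)
    have h2 := hbY (F z.1) z.2
    have habs : |cX z.1 (B z.2) - cY (F z.1) z.2| ≤ Real.sqrt (H / 4) := by
      rw [abs_sub_le_iff]
      constructor <;> linarith [h1.1, h1.2, h2.1, h2.2]
    calc f z = |cX z.1 (B z.2) - cY (F z.1) z.2| ^ 2 := (sq_abs _).symm
      _ ≤ Real.sqrt (H / 4) ^ 2 := pow_le_pow_left₀ (abs_nonneg _) habs 2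
      _ = H / 4 := hsq
  have hfm_slice : ∀ x : X, Measurable fun y => f (x, y) := fun x =>
    hfm.comp (measurable_const.prodMk measurable_id)
  have hfint_slice : ∀ x : X, Integrable (fun y => f (x, y)) ν := by
    intro x
    refine (integrable_const (H / 4)).mono' (hfm_slice x).aestronglyMeasurable ?_
    refine Filter.Eventually.of_forall fun y => ?_
    rw [Real.norm_eq_abs, abs_of_nonneg (hf0 _)]; exact hfub _
  set h : X → ℝ := fun x => ∫ y, f (x, y) ∂ν with hhdef
  have hhm : Measurable h := hfm.stronglyMeasurable.integral_prod_right'.measurable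
  have hh0 : ∀ x, 0 ≤ h x := fun x => integral_nonneg fun y => hf0 _
  have hhub : ∀ x, h x ≤ H / 4 := by
    intro x
    calc h x ≤ ∫ _y, H / 4 ∂ν :=
          integral_mono (hfint_slice x) (integrable_const _) fun y => hfub _
      _ = H / 4 := by simp
  have hhint : Integrable h μ := by
    refine (integrable_const (H / 4)).mono' hhm.aestronglyMeasurable ?_
    refine Filter.Eventually.of_forall fun x => ?_
    rw [Real.norm_eq_abs, abs_of_nonneg (hh0 x)]; exact hhub x
  set C₀ : ℝ := ∫ z, f z ∂(μ.prod ν) with hC₀def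
  have hfint : Integrable f (μ.prod ν) := by
    refine (integrable_const (H / 4)).mono' hfm.aestronglyMeasurable ?_
    refine Filter.Eventually.of_forall fun z => ?_
    rw [Real.norm_eq_abs, abs_of_nonneg (hf0 z)]; exact hfub z
  have hC₀h : C₀ = ∫ x, h x ∂μ := integral_prod f hfint
  have hC₀0 : 0 ≤ C₀ := by
    rw [hC₀h]; exact integral_nonneg fun x => hh0 x
  have hC₀ub : C₀ ≤ H / 4 := by
    rw [hC₀h]
    calc ∫ x, h x ∂μ ≤ ∫ _x, H / 4 ∂μ :=
          integral_mono hhint (integrable_const _) fun x => hhub x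
      _ = H / 4 := by simp
  -- the constants
  set L : ℝ := Real.log ((max m n : ℝ) / δ) with hLdef
  have hratio1 : 1 ≤ (max m n : ℝ) / δ := by
    rw [le_div_iff₀ hδ0]
    calc 1 * δ = δ := one_mul δ
      _ ≤ 1 := hδ1.le
      _ ≤ _ := hmax1
  have hL0 : 0 ≤ L := Real.log_nonneg hratio1
  have hexpL : Real.exp L = (max m n : ℝ) / δ := Real.exp_log (by linarith)
  have hexp2L : Real.exp (-(2 * L)) ≤ δ := by
    have h1 : Real.exp (-(2 * L)) = (δ / (max m n : ℝ)) ^ 2 := by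
      rw [show -(2 * L) = -L + -L by ring, Real.exp_add, Real.exp_neg, hexpL, inv_div]
      ring
    rw [h1]
    have hd : δ / (max m n : ℝ) ≤ δ := div_le_self hδ0.le hmax1
    have hd0 : 0 ≤ δ / (max m n : ℝ) := by positivity
    nlinarith
  set s : ℝ := 1 * H * Real.sqrt (L / (min m n : ℝ)) with hsdef
  have hs0 : 0 ≤ s := by
    apply mul_nonneg (by linarith) (Real.sqrt_nonneg _)
  set t : ℝ := s / 2 with htdef
  have ht0 : 0 ≤ t := by rw [htdef]; linarith
  have ht2 : t ^ 2 = H ^ 2 * L / (4 * min (m : ℝ) (n : ℝ)) := by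
    rw [htdef, hsdef, div_pow, one_mul, mul_pow, Real.sq_sqrt (div_nonneg hL0 hmin0.le)]
    ring
  have hexp_gen : ∀ q : ℕ, min (m : ℝ) (n : ℝ) ≤ (q : ℝ) →
      Real.exp (-((q : ℝ) * t ^ 2) / (2 * (H / 4) ^ 2)) ≤ δ := by
    intro q hq
    refine le_trans (Real.exp_le_exp.2 ?_) hexp2L
    rw [ht2]
    have hkey : -((q : ℝ) * (H ^ 2 * L / (4 * min (m : ℝ) (n : ℝ)))) / (2 * (H / 4) ^ 2)
        = -(2 * ((q : ℝ) / min (m : ℝ) (n : ℝ)) * L) := by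
      field_simp
      ring
    rw [hkey]
    have hq1 : 1 ≤ (q : ℝ) / min (m : ℝ) (n : ℝ) := (one_le_div hmin0).2 hq
    nlinarith
  -- centered functions
  set g₁ : X → ℝ := fun x => h x - C₀ with hg₁def
  have hg₁m : Measurable g₁ := hhm.sub measurable_const
  have hg₁b : ∀ x, |g₁ x| ≤ H / 4 := fun x =>
    abs_le.2 ⟨by simp only [hg₁def]; linarith [hh0 x, hC₀ub], by simp only [hg₁def]; linarith [hhub x, hC₀0]⟩
  have hg₁mean : ∫ x, g₁ x ∂μ = 0 := by
    have : ∫ x, g₁ x ∂μ = (∫ x, h x ∂μ) - C₀ := by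
      simp only [hg₁def]
      rw [integral_sub hhint (integrable_const _), integral_const, probReal_univ]
      simp
    rw [this, ← hC₀h, sub_self]
  set k : (Fin m → X) → Y → ℝ :=
    fun x y => (1 / (m : ℝ)) * ∑ i, f (x i, y) - (1 / (m : ℝ)) * ∑ i, h (x i) with hkdef
  have hkm : ∀ x, Measurable (k x) := fun x =>
    ((Finset.measurable_sum _ fun i _ => hfm_slice (x i)).const_mul _).sub measurable_const
  have havg_f : ∀ (x : Fin m → X) (y : Y),
      0 ≤ (1 / (m : ℝ)) * ∑ i, f (x i, y) ∧ (1 / (m : ℝ)) * ∑ i, f (x i, y) ≤ H / 4 := by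
    intro x y
    constructor
    · apply mul_nonneg (by positivity)
      exact Finset.sum_nonneg fun i _ => hf0 _
    · have hsum : ∑ i, f (x i, y) ≤ (m : ℝ) * (H / 4) := by
        calc ∑ i, f (x i, y) ≤ ∑ _i : Fin m, H / 4 := Finset.sum_le_sum fun i _ => hfub _
          _ = (m : ℝ) * (H / 4) := by
            rw [Finset.sum_const, Finset.card_univ, Fintype.card_fin, nsmul_eq_mul]
      calc (1 / (m : ℝ)) * ∑ i, f (x i, y) ≤ (1 / (m : ℝ)) * ((m : ℝ) * (H / 4)) := by
            apply mul_le_mul_of_nonneg_left hsum (by positivity)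
        _ = H / 4 := by field_simp
  have havg_h : ∀ x : Fin m → X,
      0 ≤ (1 / (m : ℝ)) * ∑ i, h (x i) ∧ (1 / (m : ℝ)) * ∑ i, h (x i) ≤ H / 4 := by
    intro x
    constructor
    · apply mul_nonneg (by positivity)
      exact Finset.sum_nonneg fun i _ => hh0 _
    · have hsum : ∑ i, h (x i) ≤ (m : ℝ) * (H / 4) := by
        calc ∑ i, h (x i) ≤ ∑ _i : Fin m, H / 4 := Finset.sum_le_sum fun i _ => hhub _
          _ = (m : ℝ) * (H / 4) := by
            rw [Finset.sum_const, Finset.card_univ, Fintype.card_fin, nsmul_eq_mul]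
      calc (1 / (m : ℝ)) * ∑ i, h (x i) ≤ (1 / (m : ℝ)) * ((m : ℝ) * (H / 4)) := by
            apply mul_le_mul_of_nonneg_left hsum (by positivity)
        _ = H / 4 := by field_simp
  have hkb : ∀ x y, |k x y| ≤ H / 4 := by
    intro x y
    have h1 := havg_f x y
    have h2 := havg_h x
    show |(1 / (m : ℝ)) * ∑ i, f (x i, y) - (1 / (m : ℝ)) * ∑ i, h (x i)| ≤ H / 4
    exact abs_le.2 ⟨by linarith [h1.1, h1.2, h2.1, h2.2], by linarith [h1.1, h1.2, h2.1, h2.2]⟩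
  have hkmean : ∀ x, ∫ y, k x y ∂ν = 0 := by
    intro x
    have hint1 : Integrable (fun y => ∑ i, f (x i, y)) ν :=
      integrable_finset_sum _ fun i _ => hfint_slice (x i)
    have heq : ∑ i, ∫ y, f (x i, y) ∂ν = ∑ i, h (x i) :=
      Finset.sum_congr rfl fun i _ => rfl
    have hstep : ∫ y, k x y ∂ν = (1 / (m : ℝ)) * (∑ i, ∫ y, f (x i, y) ∂ν)
        - (1 / (m : ℝ)) * ∑ i, h (x i) := by
      show ∫ y, ((1 / (m : ℝ)) * ∑ i, f (x i, y) - (1 / (m : ℝ)) * ∑ i, h (x i)) ∂ν = _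
      rw [integral_sub (hint1.const_mul _) (integrable_const _), integral_const_mul,
        integral_finset_sum _ fun i _ => hfint_slice (x i), integral_const, probReal_univ,
        one_smul]
    rw [hstep, heq, sub_self]
  have hkj : ∀ j : Fin n, Measurable fun p : (Fin m → X) × (Fin n → Y) => k p.1 (p.2 j) := by
    intro j
    have hrw : (fun p : (Fin m → X) × (Fin n → Y) => k p.1 (p.2 j))
        = fun p => (1 / (m : ℝ)) * ∑ i, f (p.1 i, p.2 j)
            - (1 / (m : ℝ)) * ∑ i, h (p.1 i) := rfl
    rw [hrw]
    apply Measurable.sub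
    · apply Measurable.const_mul
      apply Finset.measurable_sum
      intro i _
      exact hfm.comp (((measurable_pi_apply i).comp measurable_fst).prodMk
        ((measurable_pi_apply j).comp measurable_snd))
    · apply Measurable.const_mul
      apply Finset.measurable_sum
      intro i _
      exact hhm.comp ((measurable_pi_apply i).comp measurable_fst)
  have hdecomp : ∀ p : (Fin m → X) × (Fin n → Y),
      1 / ((m : ℝ) * n) * (∑ i, ∑ j, f (p.1 i, p.2 j)) - C₀
        = (1 / (m : ℝ)) * ∑ i, g₁ (p.1 i) + (1 / (n : ℝ)) * ∑ j, k p.1 (p.2 j) := by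
    intro p
    have e1 : ∑ i, g₁ (p.1 i) = (∑ i, h (p.1 i)) - (m : ℝ) * C₀ := by
      simp only [hg₁def]
      rw [Finset.sum_sub_distrib, Finset.sum_const, Finset.card_univ, Fintype.card_fin,
        nsmul_eq_mul]
    have e2 : ∑ j, k p.1 (p.2 j)
        = (1 / (m : ℝ)) * (∑ i, ∑ j, f (p.1 i, p.2 j))
          - (n : ℝ) * ((1 / (m : ℝ)) * ∑ i, h (p.1 i)) := by
      simp only [hkdef]
      rw [Finset.sum_sub_distrib, Finset.sum_const, Finset.card_univ, Fintype.card_fin,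
        nsmul_eq_mul, ← Finset.mul_sum, Finset.sum_comm]
    rw [e1, e2]
    have hmne : (m : ℝ) ≠ 0 := ne_of_gt hm0
    have hnne : (n : ℝ) ≠ 0 := ne_of_gt hn0
    field_simp
    ring
  show ENNReal.ofReal (1 - 4 * δ) ≤
    ((Measure.pi fun _ : Fin m => μ).prod (Measure.pi fun _ : Fin n => ν))
      {p : (Fin m → X) × (Fin n → Y) |
        |1 / ((m : ℝ) * n) * (∑ i, ∑ j, f (p.1 i, p.2 j)) - C₀| ≤ s}
  clear_value f h C₀ L s t g₁ k
  -- the four bad events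
  have hbound1 : (Measure.pi fun _ : Fin m => μ) {x | (m : ℝ) * t ≤ ∑ i, g₁ (x i)} ≤
      ENNReal.ofReal δ :=
    le_trans (aux_hoeffding_pi μ hg₁m hc hg₁b hg₁mean m ht0)
      (ENNReal.ofReal_le_ofReal (hexp_gen m hminm))
  have hbound2 : (Measure.pi fun _ : Fin m => μ) {x | (m : ℝ) * t ≤ ∑ i, -g₁ (x i)} ≤
      ENNReal.ofReal δ :=
    le_trans (aux_hoeffding_pi μ hg₁m.neg hc (fun x => by rw [Pi.neg_apply, abs_neg]; exact hg₁b x)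
        (by simp only [Pi.neg_apply]; rw [integral_neg, hg₁mean, neg_zero]) m ht0)
      (ENNReal.ofReal_le_ofReal (hexp_gen m hminm))
  
  have hmeas3 : MeasurableSet
      {p : (Fin m → X) × (Fin n → Y) | (n : ℝ) * t ≤ ∑ j, k p.1 (p.2 j)} :=
    measurableSet_le measurable_const (Finset.measurable_sum _ fun j _ => hkj j)
  have hmeas4 : MeasurableSet
      {p : (Fin m → X) × (Fin n → Y) | (n : ℝ) * t ≤ ∑ j, -k p.1 (p.2 j)} :=
    measurableSet_le measurable_const (Finset.measurable_sum _ fun j _ => (hkj j).neg)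
  have hbound3 : ((Measure.pi fun _ : Fin m => μ).prod (Measure.pi fun _ : Fin n => ν))
      {p | (n : ℝ) * t ≤ ∑ j, k p.1 (p.2 j)} ≤ ENNReal.ofReal δ := by
    rw [Measure.prod_apply hmeas3]
    refine le_trans (lintegral_mono (g := fun _ => ENNReal.ofReal δ) fun x => ?_) ?_
    · exact le_trans (aux_hoeffding_pi ν (hkm x) hc (hkb x) (hkmean x) n ht0)
        (ENNReal.ofReal_le_ofReal (hexp_gen n hminn))
    · rw [lintegral_const, measure_univ, mul_one]
  have hbound4 : ((Measure.pi fun _ : Fin m => μ).prod (Measure.pi fun _ : Fin n => ν))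
      {p | (n : ℝ) * t ≤ ∑ j, -k p.1 (p.2 j)} ≤ ENNReal.ofReal δ := by
    rw [Measure.prod_apply hmeas4]
    refine le_trans (lintegral_mono (g := fun _ => ENNReal.ofReal δ) fun x => ?_) ?_
    · exact le_trans (aux_hoeffding_pi ν (hkm x).neg hc
        (fun y => by rw [Pi.neg_apply, abs_neg]; exact hkb x y)
        (by simp only [Pi.neg_apply]; rw [integral_neg, hkmean x, neg_zero]) n ht0)
        (ENNReal.ofReal_le_ofReal (hexp_gen n hminn))
    · rw [lintegral_const, measure_univ, mul_one]
  set Sg : Set ((Fin m → X) × (Fin n → Y)) :=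
    {p | |1 / ((m : ℝ) * n) * (∑ i, ∑ j, f (p.1 i, p.2 j)) - C₀| ≤ s} with hSgdef
  have hGm : Measurable fun p : (Fin m → X) × (Fin n → Y) =>
      1 / ((m : ℝ) * n) * (∑ i, ∑ j, f (p.1 i, p.2 j)) - C₀ := by
    apply Measurable.sub _ measurable_const
    apply Measurable.const_mul
    apply Finset.measurable_sum
    intro i _
    apply Finset.measurable_sum
    intro j _
    exact hfm.comp (((measurable_pi_apply i).comp measurable_fst).prodMk
      ((measurable_pi_apply j).comp measurable_snd))
  have hSgm : MeasurableSet Sg := measurableSet_le hGm.abs measurable_const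
  have hincl : Sgᶜ ⊆ (({x | (m : ℝ) * t ≤ ∑ i, g₁ (x i)} ×ˢ (Set.univ : Set (Fin n → Y))
      ∪ {x | (m : ℝ) * t ≤ ∑ i, -g₁ (x i)} ×ˢ (Set.univ : Set (Fin n → Y)))
      ∪ {p : (Fin m → X) × (Fin n → Y) | (n : ℝ) * t ≤ ∑ j, k p.1 (p.2 j)})
      ∪ {p : (Fin m → X) × (Fin n → Y) | (n : ℝ) * t ≤ ∑ j, -k p.1 (p.2 j)} := by
    intro p hp
    simp only [Set.mem_compl_iff, hSgdef, Set.mem_setOf_eq, not_le] at hp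
    rw [hdecomp p] at hp
    simp only [Set.mem_union, Set.mem_prod, Set.mem_setOf_eq, Set.mem_univ, and_true]
    have habs := abs_add_le ((1 / (m : ℝ)) * ∑ i, g₁ (p.1 i))
      ((1 / (n : ℝ)) * ∑ j, k p.1 (p.2 j))
    have hts : s = t + t := by rw [htdef]; ring
    have hcase : t < |(1 / (m : ℝ)) * ∑ i, g₁ (p.1 i)|
        ∨ t < |(1 / (n : ℝ)) * ∑ j, k p.1 (p.2 j)| := by
      by_contra hcon
      push_neg at hcon
      rw [hts] at hp
      linarith [hcon.1, hcon.2, habs, hp]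
    rcases hcase with hA | hBt
    · rcases lt_abs.1 hA with hA1 | hA2
      · left; left; left
        have h5 := mul_lt_mul_of_pos_left hA1 hm0
        rw [show (m : ℝ) * ((1 / (m : ℝ)) * ∑ i, g₁ (p.1 i)) = ∑ i, g₁ (p.1 i) by
          field_simp <;> ring] at h5
        linarith
      · left; left; right
        rw [show (∑ i, -g₁ (p.1 i)) = -∑ i, g₁ (p.1 i) by rw [Finset.sum_neg_distrib]]
        have h5 := mul_lt_mul_of_pos_left hA2 hm0
        rw [show (m : ℝ) * -((1 / (m : ℝ)) * ∑ i, g₁ (p.1 i)) = -∑ i, g₁ (p.1 i) by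
          field_simp <;> ring] at h5
        linarith
    · rcases lt_abs.1 hBt with hB1 | hB2
      · left; right
        have h5 := mul_lt_mul_of_pos_left hB1 hn0
        rw [show (n : ℝ) * ((1 / (n : ℝ)) * ∑ j, k p.1 (p.2 j)) = ∑ j, k p.1 (p.2 j) by
          field_simp <;> ring] at h5
        linarith
      · right
        rw [show (∑ j, -k p.1 (p.2 j)) = -∑ j, k p.1 (p.2 j) by rw [Finset.sum_neg_distrib]]
        have h5 := mul_lt_mul_of_pos_left hB2 hn0
        rw [show (n : ℝ) * -((1 / (n : ℝ)) * ∑ j, k p.1 (p.2 j)) = -∑ j, k p.1 (p.2 j) by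
          field_simp <;> ring] at h5
        linarith
  have hE1 : ((Measure.pi fun _ : Fin m => μ).prod (Measure.pi fun _ : Fin n => ν))
      ({x | (m : ℝ) * t ≤ ∑ i, g₁ (x i)} ×ˢ (Set.univ : Set (Fin n → Y)))
      ≤ ENNReal.ofReal δ := by
    rw [Measure.prod_prod, measure_univ, mul_one]
    exact hbound1
  have hE2 : ((Measure.pi fun _ : Fin m => μ).prod (Measure.pi fun _ : Fin n => ν))
      ({x | (m : ℝ) * t ≤ ∑ i, -g₁ (x i)} ×ˢ (Set.univ : Set (Fin n → Y)))
      ≤ ENNReal.ofReal δ := by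
    rw [Measure.prod_prod, measure_univ, mul_one]
    exact hbound2
  have hbadle : ((Measure.pi fun _ : Fin m => μ).prod (Measure.pi fun _ : Fin n => ν)) Sgᶜ
      ≤ ENNReal.ofReal (4 * δ) := by
    refine le_trans (measure_mono hincl) ?_
    refine le_trans (measure_union_le _ _) ?_
    refine le_trans (add_le_add (le_trans (measure_union_le _ _)
      (add_le_add (le_trans (measure_union_le _ _) (add_le_add hE1 hE2)) hbound3))
      hbound4) ?_
    rw [← ENNReal.ofReal_add hδ0.le hδ0.le, ← ENNReal.ofReal_add (by linarith) hδ0.le,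
      ← ENNReal.ofReal_add (by linarith) hδ0.le]
    exact ENNReal.ofReal_le_ofReal (by linarith)
  have hcompl : ((Measure.pi fun _ : Fin m => μ).prod (Measure.pi fun _ : Fin n => ν)) Sg
      = 1 - ((Measure.pi fun _ : Fin m => μ).prod (Measure.pi fun _ : Fin n => ν)) Sgᶜ := by
    have h2 := prob_compl_eq_one_sub
      (μ := (Measure.pi fun _ : Fin m => μ).prod (Measure.pi fun _ : Fin n => ν)) hSgm.compl
    rwa [compl_compl] at h2
  rw [hcompl]
  calc ENNReal.ofReal (1 - 4 * δ) = 1 - ENNReal.ofReal (4 * δ) := by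
        rw [ENNReal.ofReal_sub 1 (by positivity), ENNReal.ofReal_one]
    _ ≤ _ := tsub_le_tsub_left hbadle 1
end
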